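/- Let H be a real Hilbert space, f : H → ℝ ∪ {+∞} a proper lower semicontinuous function, x̄ ∈ dom f and p ∈ ∂_p f(x̄). If there exists λ > 0 such that f − (1/(2λ))‖·‖² is concave on H, then f''₋(x̄, p, ·) − (1/λ)‖·‖² is concave on H: for all u, v ∈ H and μ ∈ [0, 1], f''₋(x̄, p, μu + (1−μ)v) − (1/λ)‖μu + (1−μ)v‖² ≥ μ(f''₋(x̄, p, u) − (1/λ)‖u‖²) + (1−μ)(f''₋(x̄, p, v) − (1/λ)‖v‖²) in extended-real arithmetic. -/

import Mathlib

open Filter Topology Set Pointwise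

noncomputable section

variable {H : Type*} [NormedAddCommGroup H] [InnerProductSpace ℝ H] [CompleteSpace H]

/-- The proximal subdifferential of `f` at `x`. -/
def proxSubdiff (f : H → EReal) (x : H) : Set H :=
  {ζ | ∃ σ > (0:ℝ), ∃ δ > (0:ℝ), ∀ y ∈ Metric.ball x δ,
    f x + (((inner ℝ ζ (y - x) : ℝ) - σ / 2 * ‖y - x‖ ^ 2 : ℝ) : EReal) ≤ f y}

/-- The second-order difference quotient `Δ₂f(x₀,p,t,u)`. -/
def Delta2 (f : H → EReal) (x₀ p : H) (t : ℝ) (u : H) : EReal :=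
  ((2 / t ^ 2 : ℝ) : EReal) * (f (x₀ + t • u) - f x₀ - ((t * (inner ℝ p u : ℝ) : ℝ) : EReal))

/-- The second-order lower Dini-directional derivative `f''₋(x₀,p,h)`. -/
def secondDini (f : H → EReal) (x₀ p h : H) : EReal :=
  Filter.liminf (fun q : ℝ × H => Delta2 f x₀ p q.1 q.2)
    ((nhdsWithin (0:ℝ) (Set.Ioi 0)) ×ˢ (nhds h))

/-- Weak sequential convergence in a Hilbert space. -/
def WeakTendsto (u : ℕ → H) (x : H) : Prop :=
  ∀ w : H, Tendsto (fun n => (inner ℝ (u n) w : ℝ)) atTop (nhds (inner ℝ x w : ℝ))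

/-- The mixed contingent cone `T_M(gph ∂_p f, (x₀,p))`. -/
def mixedTangent (f : H → EReal) (x₀ p : H) : Set (H × H) :=
  {q | ∃ (t : ℕ → ℝ) (hn zn : ℕ → H),
    (∀ n, 0 < t n) ∧ Tendsto t atTop (nhds 0) ∧
    Tendsto hn atTop (nhds q.1) ∧ WeakTendsto zn q.2 ∧
    ∀ n, p + t n • zn n ∈ proxSubdiff f (x₀ + t n • hn n)}

/-- The second-order mixed graphical derivative `D²_M f(x₀,p)(h)`. -/
def D2M (f : H → EReal) (x₀ p : H) (h : H) : Set H := {z | (h, z) ∈ mixedTangent f x₀ p}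

/-- Dual cone of a subset of `H × H`. -/
def dualConePair (S : Set (H × H)) : Set (H × H) :=
  {q | ∀ w ∈ S, (inner ℝ q.1 w.1 : ℝ) + (inner ℝ q.2 w.2 : ℝ) ≤ 0}

/-- `N_M(gph ∂_p f, (x₀,p))`, the dual cone of the mixed contingent cone. -/
def NM (f : H → EReal) (x₀ p : H) : Set (H × H) := dualConePair (mixedTangent f x₀ p)

/-- The second-order mixed proximal subdifferential `∂²_M f(x₀,p)(h)`. -/
def partial2M (f : H → EReal) (x₀ p : H) (h : H) : Set H := {z | (z, -h) ∈ NM f x₀ p}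

/-- The limiting (Mordukhovich) subdifferential of `g` at `x`. -/
def limitSubdiff (g : H → EReal) (x : H) : Set H :=
  {ζ | ∃ (xn ζn : ℕ → H), Tendsto xn atTop (nhds x) ∧
    Tendsto (fun n => g (xn n)) atTop (nhds (g x)) ∧
    WeakTendsto ζn ζ ∧ ∀ n, ζn n ∈ proxSubdiff g (xn n)}

/-- Epigraph of an `EReal`-valued function, viewed inside `H × ℝ`. -/
def epiE (g : H → EReal) : Set (H × ℝ) := {q | g q.1 ≤ (q.2 : EReal)}

/-- Weak convergence in `H × ℝ`: weak in `H`, usual in `ℝ`. -/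
def WeakTendstoPair (u : ℕ → H × ℝ) (q : H × ℝ) : Prop :=
  WeakTendsto (fun n => (u n).1) q.1 ∧ Tendsto (fun n => (u n).2) atTop (nhds q.2)

/-- Mosco convergence of a sequence of subsets of `H × ℝ` to `L`. -/
def MoscoConv (C : ℕ → Set (H × ℝ)) (L : Set (H × ℝ)) : Prop :=
  (L = {q | ∃ u : ℕ → H × ℝ, (∀ n, u n ∈ C n) ∧ Tendsto u atTop (nhds q)}) ∧
  (L = {q | ∃ (u : ℕ → H × ℝ) (φ : ℕ → ℕ), StrictMono φ ∧ (∀ n, u n ∈ C n) ∧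
      WeakTendstoPair (fun n => u (φ n)) q})

/-- `f` is twice epi-differentiable at `x₀` relative to `p` in the sense of Mosco. -/
def TwiceEpiDiff (f : H → EReal) (x₀ p : H) : Prop :=
  ∃ g : H → EReal, (∀ x, g x ≠ ⊥) ∧ (∃ x, g x ≠ ⊤) ∧
    ∀ t : ℕ → ℝ, (∀ n, 0 < t n) → Tendsto t atTop (nhds 0) →
      MoscoConv (fun n => epiE (fun u => Delta2 f x₀ p (t n) u)) (epiE g)

/-- Concavity on a set for `EReal`-valued functions. -/
def ConcaveOnE {E : Type*} [AddCommGroup E] [Module ℝ E] (s : Set E) (g : E → EReal) : Prop :=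
  ∀ u ∈ s, ∀ v ∈ s, ∀ μ : ℝ, 0 ≤ μ → μ ≤ 1 →
    ((μ : ℝ) : EReal) * g u + ((1 - μ : ℝ) : EReal) * g v ≤ g (μ • u + (1 - μ) • v)

/-- `f` is paraconcave: `f - (1/(2λ))‖·‖²` is concave for some `λ > 0`. -/
def Paraconcave (f : H → EReal) : Prop :=
  ∃ lam > (0:ℝ), ConcaveOnE Set.univ
    (fun x => f x - ((1 / (2 * lam) * ‖x‖ ^ 2 : ℝ) : EReal))

/-- The cone generated by `A - x`. -/
def coneGen {E : Type*} [AddCommGroup E] [Module ℝ E] (A : Set E) (x : E) : Set E :=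
  {y | ∃ t : ℝ, 0 ≤ t ∧ ∃ a ∈ A, y = t • (a - x)}

/-- Quasi-relative interior. -/
def qri {E : Type*} [NormedAddCommGroup E] [NormedSpace ℝ E] (A : Set E) : Set E :=
  {x ∈ A | ∃ S : Submodule ℝ E, closure (coneGen A x) = (S : Set E)}

/-- Strong quasi-relative interior. -/
def sqri {E : Type*} [NormedAddCommGroup E] [NormedSpace ℝ E] (A : Set E) : Set E :=
  {x ∈ A | ∃ S : Submodule ℝ E, IsClosed (S : Set E) ∧ coneGen A x = (S : Set E)}

/-- Second-order optimality condition of the first kind at `x₀`. -/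
def SOC1 (f : H → EReal) (x₀ : H) : Prop :=
  ∃ β > (0:ℝ), ∀ h : H, ‖h‖ = 1 → ((β : ℝ) : EReal) ≤ secondDini f x₀ 0 h

/-- Second-order optimality condition of the second kind at `x₀`. -/
def SOC2 (f : H → EReal) (x₀ : H) : Prop :=
  ∃ β > (0:ℝ), ∀ h : H, ‖h‖ = 1 → (D2M f x₀ 0 h).Nonempty →
    ∃ z ∈ D2M f x₀ 0 h, β ≤ (inner ℝ z h : ℝ)

/-- Second-order optimality condition of the third kind at `x₀`. -/
def SOC3 (f : H → EReal) (x₀ : H) : Prop :=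
  ∃ β > (0:ℝ), ∀ h : H, ‖h‖ = 1 → ∀ z ∈ partial2M f x₀ 0 h, β ≤ (inner ℝ z h : ℝ)

/-- `x₀` is a strict local minimizer of order two for `f`. -/
def StrictLocalMinOrder2 (f : H → EReal) (x₀ : H) : Prop :=
  ∃ β > (0:ℝ), ∃ δ > (0:ℝ), ∀ x ∈ Metric.ball x₀ δ,
    f x₀ + ((β / 2 * ‖x - x₀‖ ^ 2 : ℝ) : EReal) ≤ f x

/-- `f''₋(x₀,p,h) ≥ β` holds uniformly with respect to `h ∈ A`. -/
def UniformDiniGE (f : H → EReal) (x₀ p : H) (β : ℝ) (A : Set H) : Prop :=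
  ∀ ε > (0:ℝ), ∃ δ > (0:ℝ), ∀ t : ℝ, 0 < t → t < δ →
    ∀ h ∈ A + Metric.closedBall (0:H) δ, ((β - ε : ℝ) : EReal) ≤ Delta2 f x₀ p t h

namespace ParaAux

lemma pos_mul_add_coe {K : ℝ} (hK : 0 < K) (X : EReal) (r : ℝ) :
    (K : EReal) * (X + (r : EReal)) = (K : EReal) * X + ((K * r : ℝ) : EReal) := by
  induction X with
  | bot => simp [EReal.bot_add, EReal.coe_mul_bot_of_pos hK]
  | coe x => norm_cast; ring
  | top =>
    rw [EReal.top_add_coe, EReal.coe_mul_top_of_pos hK, EReal.top_add_coe]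

lemma pos_mul_ne_bot {K : ℝ} (hK : 0 < K) {X : EReal} (hX : X ≠ ⊥) :
    (K : EReal) * X ≠ ⊥ := by
  induction X with
  | bot => exact absurd rfl hX
  | coe x => rw [← EReal.coe_mul]; exact EReal.coe_ne_bot _
  | top => rw [EReal.coe_mul_top_of_pos hK]; simp

lemma add_coe_ne_bot {X : EReal} (hX : X ≠ ⊥) (r : ℝ) : X + (r : EReal) ≠ ⊥ := by
  induction X with
  | bot => exact absurd rfl hX
  | coe x => rw [← EReal.coe_add]; simp
  | top => rw [EReal.top_add_coe]; simp

lemma sub_coe_ne_bot {X : EReal} (hX : X ≠ ⊥) (r : ℝ) : X - (r : EReal) ≠ ⊥ := by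
  rw [sub_eq_add_neg, ← EReal.coe_neg]; exact add_coe_ne_bot hX _

lemma pos_mul_add {K : ℝ} (hK : 0 < K) {A B : EReal} (hA : A ≠ ⊥) (hB : B ≠ ⊥) :
    (K : EReal) * (A + B) = (K : EReal) * A + (K : EReal) * B := by
  induction A with
  | bot => exact absurd rfl hA
  | top =>
    rw [EReal.top_add_of_ne_bot hB, EReal.coe_mul_top_of_pos hK,
      EReal.top_add_of_ne_bot (pos_mul_ne_bot hK hB)]
  | coe a =>
    induction B with
    | bot => exact absurd rfl hB
    | top =>
      rw [EReal.add_top_of_ne_bot (by simp), EReal.coe_mul_top_of_pos hK,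
        EReal.add_top_of_ne_bot (pos_mul_ne_bot hK (by simp))]
    | coe b => norm_cast; ring

/-- Multiplication by a positive real as an order isomorphism of `EReal`. -/
noncomputable def mulIso {K : ℝ} (hK : 0 < K) : EReal ≃o EReal where
  toFun x := (K : EReal) * x
  invFun x := ((K⁻¹ : ℝ) : EReal) * x
  left_inv x := by
    show ((K⁻¹:ℝ):EReal) * ((K:EReal) * x) = x
    rw [← mul_assoc, ← EReal.coe_mul, inv_mul_cancel₀ hK.ne', EReal.coe_one, one_mul]
  right_inv x := by
    show ((K:ℝ):EReal) * (((K⁻¹:ℝ):EReal) * x) = x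
    rw [← mul_assoc, ← EReal.coe_mul, mul_inv_cancel₀ hK.ne', EReal.coe_one, one_mul]
  map_rel_iff' := by
    intro a b
    simp only [Equiv.coe_fn_mk]
    constructor
    · intro h
      have h2 := mul_le_mul_of_nonneg_left h
        (le_of_lt (by exact_mod_cast inv_pos.2 hK : (0 : EReal) < ((K⁻¹ : ℝ) : EReal)))
      rwa [← mul_assoc, ← mul_assoc, ← EReal.coe_mul, inv_mul_cancel₀ hK.ne',
        EReal.coe_one, one_mul, one_mul] at h2
    · intro h
      exact mul_le_mul_of_nonneg_left h (by exact_mod_cast hK.le)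

lemma liminf_pos_mul {α : Type*} {F : Filter α} {g : α → EReal} {K : ℝ} (hK : 0 < K) :
    Filter.liminf (fun x => (K : EReal) * g x) F = (K : EReal) * Filter.liminf g F :=
  ((mulIso hK).liminf_apply).symm

lemma regroup (A B : EReal) (r1 r2 r3 : ℝ) :
    (A + (r1 : EReal)) + (B + (r2 : EReal)) + (r3 : EReal)
      = (A + B) + ((r1 + r2 + r3 : ℝ) : EReal) := by
  rw [EReal.coe_add, EReal.coe_add]
  abel

lemma sub_coe_add_coe (X : EReal) (r ρ : ℝ) :
    X + (ρ : EReal) = (X - (r : EReal)) + ((r + ρ : ℝ) : EReal) := by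
  rw [sub_eq_add_neg, ← EReal.coe_neg, add_assoc, ← EReal.coe_add]
  norm_num

end ParaAux

section KeyAux

lemma ereal_sub_sub (X : EReal) (r q : ℝ) :
    X - (r : EReal) - (q : EReal) = X + ((-r - q : ℝ) : EReal) := by
  rw [show (-r - q : ℝ) = (-r) + (-q) by ring, EReal.coe_add, EReal.coe_neg, EReal.coe_neg,
    sub_eq_add_neg, sub_eq_add_neg, add_assoc]

lemma ereal_sub_add (X : EReal) (r q : ℝ) :
    X - (r : EReal) + (q : EReal) = X + ((q - r : ℝ) : EReal) := by
  rw [show (q - r : ℝ) = (-r) + q by ring, EReal.coe_add, EReal.coe_neg,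
    sub_eq_add_neg, add_assoc]

lemma ereal_pos_mul_sub_coe {μ : ℝ} (hμ : 0 < μ) (X : EReal) (r : ℝ) :
    (μ : EReal) * (X - (r : EReal)) = (μ : EReal) * X + ((-(μ * r) : ℝ) : EReal) := by
  rw [sub_eq_add_neg, ← EReal.coe_neg, ParaAux.pos_mul_add_coe hμ X (-r), mul_neg]

lemma ereal_regroup2 (A B : EReal) (r1 r2 : ℝ) :
    (A + (r1 : EReal)) + (B + (r2 : EReal)) = (A + B) + ((r1 + r2 : ℝ) : EReal) := by
  rw [EReal.coe_add]; abel

end KeyAux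

lemma key_ineq (f : H → EReal) (hbot : ∀ x, f x ≠ ⊥) (x₀ : H) (hdom : f x₀ ≠ ⊤)
    (p : H) (lam : ℝ) (hlam : 0 < lam)
    (hconc : ConcaveOnE Set.univ
      (fun x => f x - ((1 / (2 * lam) * ‖x‖ ^ 2 : ℝ) : EReal)))
    (u v w : H) (μ : ℝ) (hμ : 0 < μ) (hμ1 : μ < 1) (hw : w = μ • u + (1 - μ) • v)
    (t : ℝ) (ht : 0 < t) (h' : H) :
    (μ : EReal) * Delta2 f x₀ p t (h' + (u - w)) +
      ((1 - μ : ℝ) : EReal) * Delta2 f x₀ p t (h' + (v - w)) +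
      ((1 / lam * (‖h'‖ ^ 2 - μ * ‖h' + (u - w)‖ ^ 2 - (1 - μ) * ‖h' + (v - w)‖ ^ 2) : ℝ) : EReal)
      ≤ Delta2 f x₀ p t h' := by
  have hν : 0 < 1 - μ := by linarith
  set a : H := h' + (u - w) with ha
  set b : H := h' + (v - w) with hb
  have hab : μ • a + (1 - μ) • b = h' := by
    rw [ha, hb, hw]; module
  set K : ℝ := 2 / t ^ 2 with hK0
  have hK : 0 < K := by positivity
  set s : ℝ := (f x₀).toReal with hs0
  have hs : f x₀ = (s : EReal) := (EReal.coe_toReal hdom (hbot x₀)).symm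
  -- real auxiliary quantities
  set ca : ℝ := 1 / (2 * lam) * ‖x₀ + t • a‖ ^ 2 with hca
  set cb : ℝ := 1 / (2 * lam) * ‖x₀ + t • b‖ ^ 2 with hcb
  set ch : ℝ := 1 / (2 * lam) * ‖x₀ + t • h'‖ ^ 2 with hch
  set αa : ℝ := ca + (-s - t * (inner ℝ p a : ℝ)) with hαa
  set αb : ℝ := cb + (-s - t * (inner ℝ p b : ℝ)) with hαb
  set αh : ℝ := ch + (-s - t * (inner ℝ p h' : ℝ)) with hαh
  set Fa : EReal := f (x₀ + t • a) - ((ca : ℝ) : EReal) with hFa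
  set Fb : EReal := f (x₀ + t • b) - ((cb : ℝ) : EReal) with hFb
  set Fh : EReal := f (x₀ + t • h') - ((ch : ℝ) : EReal) with hFh
  have hFa_bot : Fa ≠ ⊥ := by rw [hFa]; exact ParaAux.sub_coe_ne_bot (hbot _) _
  have hFb_bot : Fb ≠ ⊥ := by rw [hFb]; exact ParaAux.sub_coe_ne_bot (hbot _) _
  -- rewrite the three difference quotients
  have hD : ∀ (z : H) (cz αz : ℝ), cz = 1 / (2 * lam) * ‖x₀ + t • z‖ ^ 2 →
      αz = cz + (-s - t * (inner ℝ p z : ℝ)) →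
      Delta2 f x₀ p t z
        = (K : EReal) * ((f (x₀ + t • z) - ((cz : ℝ) : EReal)) + ((αz : ℝ) : EReal)) := by
    intro z cz αz hcz hαz
    rw [Delta2, hs, ereal_sub_sub, ereal_sub_add, ← hK0]
    congr 2
    rw [hαz]; ring
  have hDa : Delta2 f x₀ p t a = (K : EReal) * (Fa + ((αa : ℝ) : EReal)) := by
    rw [hD a ca αa hca hαa, hFa]
  have hDb : Delta2 f x₀ p t b = (K : EReal) * (Fb + ((αb : ℝ) : EReal)) := by
    rw [hD b cb αb hcb hαb, hFb]
  have hDh : Delta2 f x₀ p t h' = (K : EReal) * (Fh + ((αh : ℝ) : EReal)) := by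
    rw [hD h' ch αh hch hαh, hFh]
  -- the concavity inequality
  have hpt : μ • (x₀ + t • a) + (1 - μ) • (x₀ + t • b) = x₀ + t • h' := by
    rw [← hab]; module
  have hcon := hconc (x₀ + t • a) (Set.mem_univ _) (x₀ + t • b) (Set.mem_univ _) μ hμ.le hμ1.le
  simp only [hpt] at hcon
  rw [← hca, ← hcb, ← hch, ← hFa, ← hFb, ← hFh] at hcon
  -- the real identity
  have hnorm : ∀ z : H, ‖x₀ + t • z‖ ^ 2
      = ‖x₀‖ ^ 2 + 2 * (t * (inner ℝ x₀ z : ℝ)) + t ^ 2 * ‖z‖ ^ 2 := by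
    intro z
    rw [norm_add_sq_real, real_inner_smul_right, norm_smul, Real.norm_eq_abs, mul_pow, sq_abs]
  have hip : ∀ q : H, (inner ℝ q h' : ℝ) = μ * (inner ℝ q a : ℝ) + (1 - μ) * (inner ℝ q b : ℝ) := by
    intro q
    conv_lhs => rw [← hab]
    simp [inner_add_right, real_inner_smul_right]
  have hreal : μ * (K * αa) + (1 - μ) * (K * αb)
      + 1 / lam * (‖h'‖ ^ 2 - μ * ‖a‖ ^ 2 - (1 - μ) * ‖b‖ ^ 2) = K * αh := by
    rw [hαa, hαb, hαh, hca, hcb, hch, hK0, hnorm a, hnorm b, hnorm h', hip p, hip x₀]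
    field_simp
    ring
  -- put everything together
  calc (μ : EReal) * Delta2 f x₀ p t a + ((1 - μ : ℝ) : EReal) * Delta2 f x₀ p t b
      + ((1 / lam * (‖h'‖ ^ 2 - μ * ‖a‖ ^ 2 - (1 - μ) * ‖b‖ ^ 2) : ℝ) : EReal)
      = ((μ : EReal) * ((K : EReal) * Fa) + ((μ * (K * αa) : ℝ) : EReal))
        + (((1 - μ : ℝ) : EReal) * ((K : EReal) * Fb) + (((1 - μ) * (K * αb) : ℝ) : EReal))
        + ((1 / lam * (‖h'‖ ^ 2 - μ * ‖a‖ ^ 2 - (1 - μ) * ‖b‖ ^ 2) : ℝ) : EReal) := by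
        rw [hDa, hDb, ParaAux.pos_mul_add_coe hK Fa αa, ParaAux.pos_mul_add_coe hK Fb αb,
          ParaAux.pos_mul_add_coe hμ ((K : EReal) * Fa) (K * αa),
          ParaAux.pos_mul_add_coe hν ((K : EReal) * Fb) (K * αb)]
    _ = ((μ : EReal) * ((K : EReal) * Fa) + ((1 - μ : ℝ) : EReal) * ((K : EReal) * Fb))
        + ((μ * (K * αa) + (1 - μ) * (K * αb)
            + 1 / lam * (‖h'‖ ^ 2 - μ * ‖a‖ ^ 2 - (1 - μ) * ‖b‖ ^ 2) : ℝ) : EReal) := by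
        rw [ParaAux.regroup]
    _ = ((K : EReal) * ((μ : EReal) * Fa + ((1 - μ : ℝ) : EReal) * Fb)) + ((K * αh : ℝ) : EReal) := by
        rw [hreal, ParaAux.pos_mul_add hK (ParaAux.pos_mul_ne_bot hμ hFa_bot)
          (ParaAux.pos_mul_ne_bot hν hFb_bot), mul_left_comm ((K : ℝ) : EReal) ((μ : ℝ) : EReal) Fa,
          mul_left_comm ((K : ℝ) : EReal) (((1 - μ : ℝ)) : EReal) Fb]
    _ ≤ ((K : EReal) * Fh) + ((K * αh : ℝ) : EReal) := by
        exact add_le_add (mul_le_mul_of_nonneg_left hcon (by exact_mod_cast hK.le)) le_rfl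
    _ = Delta2 f x₀ p t h' := by
        rw [hDh, ParaAux.pos_mul_add_coe hK Fh αh]


theorem secondDini_paraconcave (f : H → EReal) (hlsc : LowerSemicontinuous f) (hbot : ∀ x, f x ≠ ⊥)
    (hproper : ∃ x, f x ≠ ⊤) (x₀ : H) (hdom : f x₀ ≠ ⊤) (p : H) (hp : p ∈ proxSubdiff f x₀)
    (lam : ℝ) (hlam : 0 < lam)
    (hconc : ConcaveOnE Set.univ
      (fun x => f x - ((1 / (2 * lam) * ‖x‖ ^ 2 : ℝ) : EReal))) :
    ∀ (u v : H), ∀ μ : ℝ, 0 ≤ μ → μ ≤ 1 →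
      ((μ : ℝ) : EReal) * (secondDini f x₀ p u - ((1 / lam * ‖u‖ ^ 2 : ℝ) : EReal)) +
        ((1 - μ : ℝ) : EReal) * (secondDini f x₀ p v - ((1 / lam * ‖v‖ ^ 2 : ℝ) : EReal)) ≤
      secondDini f x₀ p (μ • u + (1 - μ) • v) -
        ((1 / lam * ‖μ • u + (1 - μ) • v‖ ^ 2 : ℝ) : EReal) := by
  intro u v μ hμ0 hμ1
  rcases eq_or_lt_of_le hμ0 with h0 | h0
  · rw [← h0]
    norm_num
  rcases eq_or_lt_of_le hμ1 with h1 | h1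
  · rw [h1]
    norm_num
  have hν : 0 < 1 - μ := by linarith
  set w : H := μ • u + (1 - μ) • v with hw
  set L : Filter (ℝ × H) := (nhdsWithin (0:ℝ) (Set.Ioi 0)) ×ˢ (nhds w) with hL
  haveI hLne : L.NeBot := by rw [hL]; infer_instance
  -- liminf of the shifted difference quotients
  have hmap : ∀ z : H, Filter.map (fun q : ℝ × H => (q.1, q.2 + (z - w))) L
      = (nhdsWithin (0:ℝ) (Set.Ioi 0)) ×ˢ (nhds z) := by
    intro z
    have hpm : (fun q : ℝ × H => (q.1, q.2 + (z - w)))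
        = Prod.map (fun t : ℝ => t) (fun y : H => y + (z - w)) := rfl
    rw [hL, hpm, ← Filter.prod_map_map_eq', Filter.map_id', map_add_right_nhds, add_sub_cancel]
  have hsh : ∀ z : H,
      Filter.liminf (fun q : ℝ × H => Delta2 f x₀ p q.1 (q.2 + (z - w))) L
        = secondDini f x₀ p z := by
    intro z
    have hcomp : (fun q : ℝ × H => Delta2 f x₀ p q.1 (q.2 + (z - w)))
        = (fun q : ℝ × H => Delta2 f x₀ p q.1 q.2)
          ∘ (fun q : ℝ × H => (q.1, q.2 + (z - w))) := rfl
    rw [hcomp, Filter.liminf_comp, hmap z, secondDini]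
  -- the continuous real correction term
  set c : H → ℝ := fun h' =>
    1 / lam * (‖h'‖ ^ 2 - μ * ‖h' + (u - w)‖ ^ 2 - (1 - μ) * ‖h' + (v - w)‖ ^ 2) with hc
  have hsnd : Filter.Tendsto (fun q : ℝ × H => q.2) L (nhds w) := by
    rw [hL]; exact Filter.tendsto_snd
  have hcont : Filter.Tendsto (fun q : ℝ × H => ((c q.2 : ℝ) : EReal)) L
      (nhds ((c w : ℝ) : EReal)) := by
    refine (continuous_coe_real_ereal.tendsto _).comp ?_
    refine (Continuous.tendsto ?_ w).comp hsnd
    rw [hc]; fun_prop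
  have hclim : Filter.liminf (fun q : ℝ × H => ((c q.2 : ℝ) : EReal)) L
      = ((c w : ℝ) : EReal) := hcont.liminf_eq
  -- eventual pointwise inequality
  have hev : ∀ᶠ q : ℝ × H in L,
      (μ : EReal) * Delta2 f x₀ p q.1 (q.2 + (u - w)) +
        (((1 - μ : ℝ) : EReal) * Delta2 f x₀ p q.1 (q.2 + (v - w)) + ((c q.2 : ℝ) : EReal))
        ≤ Delta2 f x₀ p q.1 q.2 := by
    have hq1 : ∀ᶠ q : ℝ × H in L, 0 < q.1 := by
      rw [hL]
      exact Filter.Eventually.prod_inl self_mem_nhdsWithin _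
    refine hq1.mono fun q hq => ?_
    have := key_ineq f hbot x₀ hdom p lam hlam hconc u v w μ h0 h1 hw q.1 hq q.2
    rw [hc]
    calc (μ : EReal) * Delta2 f x₀ p q.1 (q.2 + (u - w)) +
          (((1 - μ : ℝ) : EReal) * Delta2 f x₀ p q.1 (q.2 + (v - w)) +
            ((1 / lam * (‖q.2‖ ^ 2 - μ * ‖q.2 + (u - w)‖ ^ 2
              - (1 - μ) * ‖q.2 + (v - w)‖ ^ 2) : ℝ) : EReal))
        = (μ : EReal) * Delta2 f x₀ p q.1 (q.2 + (u - w)) +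
          ((1 - μ : ℝ) : EReal) * Delta2 f x₀ p q.1 (q.2 + (v - w)) +
            ((1 / lam * (‖q.2‖ ^ 2 - μ * ‖q.2 + (u - w)‖ ^ 2
              - (1 - μ) * ‖q.2 + (v - w)‖ ^ 2) : ℝ) : EReal) := by rw [add_assoc]
      _ ≤ Delta2 f x₀ p q.1 q.2 := this
  -- main liminf inequality
  have main : (μ : EReal) * secondDini f x₀ p u +
      (((1 - μ : ℝ) : EReal) * secondDini f x₀ p v + ((c w : ℝ) : EReal))
      ≤ secondDini f x₀ p w := by
    have h1' : secondDini f x₀ p w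
        = Filter.liminf (fun q : ℝ × H => Delta2 f x₀ p q.1 q.2) L := by
      rw [secondDini, hL]
    rw [h1', ← hsh u, ← hsh v, ← hclim,
      ← ParaAux.liminf_pos_mul (g := fun q : ℝ × H => Delta2 f x₀ p q.1 (q.2 + (u - w))) h0,
      ← ParaAux.liminf_pos_mul (g := fun q : ℝ × H => Delta2 f x₀ p q.1 (q.2 + (v - w))) hν]
    refine le_trans (add_le_add le_rfl EReal.le_liminf_add) ?_
    refine le_trans EReal.le_liminf_add ?_
    exact Filter.liminf_le_liminf hev
  -- final EReal arithmetic
  have hwu : w + (u - w) = u := by abel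
  have hwv : w + (v - w) = v := by abel
  have hcw : c w = 1 / lam * ‖w‖ ^ 2 + (-(μ * (1 / lam * ‖u‖ ^ 2)) + -((1 - μ) * (1 / lam * ‖v‖ ^ 2))) := by
    rw [hc]
    simp only [hwu, hwv]
    ring
  have hsub : secondDini f x₀ p w - ((1 / lam * ‖w‖ ^ 2 : ℝ) : EReal)
      = secondDini f x₀ p w + ((-(1 / lam * ‖w‖ ^ 2) : ℝ) : EReal) := by
    rw [sub_eq_add_neg, EReal.coe_neg]
  have hfin : (μ : EReal) * secondDini f x₀ p u + ((1 - μ : ℝ) : EReal) * secondDini f x₀ p v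
      + ((c w + -(1 / lam * ‖w‖ ^ 2) : ℝ) : EReal)
      ≤ secondDini f x₀ p w + ((-(1 / lam * ‖w‖ ^ 2) : ℝ) : EReal) := by
    calc (μ : EReal) * secondDini f x₀ p u + ((1 - μ : ℝ) : EReal) * secondDini f x₀ p v
        + ((c w + -(1 / lam * ‖w‖ ^ 2) : ℝ) : EReal)
        = ((μ : EReal) * secondDini f x₀ p u +
            (((1 - μ : ℝ) : EReal) * secondDini f x₀ p v + ((c w : ℝ) : EReal)))
          + ((-(1 / lam * ‖w‖ ^ 2) : ℝ) : EReal) := by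
          rw [EReal.coe_add]; abel
      _ ≤ secondDini f x₀ p w + ((-(1 / lam * ‖w‖ ^ 2) : ℝ) : EReal) :=
          add_le_add main le_rfl
  have harr : (-(μ * (1 / lam * ‖u‖ ^ 2)) + -((1 - μ) * (1 / lam * ‖v‖ ^ 2)) : ℝ)
      = c w + -(1 / lam * ‖w‖ ^ 2) := by rw [hcw]; ring
  rw [ereal_pos_mul_sub_coe h0, ereal_pos_mul_sub_coe hν, ereal_regroup2, harr, hsub]
  exact hfin
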